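/- Let F be a field of characteristic zero and L a finite-dimensional Lie algebra over F with only finitely many Lie ideals. Then either L equals its derived ideal L² = ⁅L,L⁆, or the quotient vector space L/L² has dimension exactly 1. -/

import Mathlib

lemma aux_finrank_le_one (F : Type*) [Field F] [Infinite F]
    (Q : Type*) [AddCommGroup Q] [Module F Q] [FiniteDimensional F Q]
    [Finite (Submodule F Q)] : Module.finrank F Q ≤ 1 := by
  by_contra h
  push_neg at h
  have b := Module.finBasis F Q
  set i0 : Fin (Module.finrank F Q) := ⟨0, by omega⟩
  set i1 : Fin (Module.finrank F Q) := ⟨1, by omega⟩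
  have h0 : i0 ≠ i1 := by simp [i0, i1, Fin.ext_iff]
  have hinj : Function.Injective
      (fun c : F => Submodule.span F {b i0 + c • b i1}) := by
    intro c c' hcc
    simp only [Submodule.span_singleton_eq_span_singleton] at hcc
    obtain ⟨a, ha⟩ := hcc
    have h1 := congrArg (fun v => b.repr v i0) ha
    have h2 := congrArg (fun v => b.repr v i1) ha
    simp [Module.Basis.repr_self, Finsupp.single_apply, h0, h0.symm, smul_smul, Units.smul_def, map_smul, Finsupp.smul_apply] at h1 h2
    rw [h1] at h2
    simpa using h2
  have : Infinite (Submodule F Q) := Infinite.of_injective _ hinj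
  exact not_finite (Submodule F Q)

theorem derived_eq_top_or_codim_one
    (F : Type*) [Field F] [CharZero F]
    (L : Type*) [LieRing L] [LieAlgebra F L] [FiniteDimensional F L]
    [Finite (LieIdeal F L)] :
    (⁅(⊤ : LieIdeal F L), (⊤ : LieIdeal F L)⁆ : LieIdeal F L) = ⊤ ∨
      Module.finrank F
        (L ⧸ (⁅(⊤ : LieIdeal F L), (⊤ : LieIdeal F L)⁆ : LieIdeal F L).toSubmodule) = 1 := by
  set I : LieIdeal F L := ⁅(⊤ : LieIdeal F L), (⊤ : LieIdeal F L)⁆ with hI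
  set S : Submodule F L := I.toSubmodule with hS
  let f : Submodule F (L ⧸ S) → LieIdeal F L := fun p =>
    { toSubmodule := p.comap S.mkQ
      lie_mem := by
        intro x m hm
        have h1 : ⁅x, m⁆ ∈ I :=
          LieSubmodule.lie_mem_lie (LieSubmodule.mem_top _) (LieSubmodule.mem_top _)
        have h2 : S.mkQ ⁅x, m⁆ = 0 := (Submodule.Quotient.mk_eq_zero S).mpr h1
        simp [Submodule.mem_comap, h2] }
  have hfinj : Function.Injective f := by
    intro p q hpq
    have h := congrArg LieSubmodule.toSubmodule hpq
    exact Submodule.comap_injective_of_surjective S.mkQ_surjective h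
  have : Finite (Submodule F (L ⧸ S)) := Finite.of_injective f hfinj
  have hle := aux_finrank_le_one F (L ⧸ S)
  rcases Nat.le_one_iff_eq_zero_or_eq_one.mp hle with h0 | h1
  · left
    have : Subsingleton (L ⧸ S) := (Module.finrank_zero_iff (R := F)).mp h0
    have hS' : S = ⊤ := (Submodule.Quotient.subsingleton_iff (p := S)).mp this
    have : I.toSubmodule = (⊤ : LieIdeal F L).toSubmodule := by
      rw [← hS, hS']; simp
    exact LieSubmodule.toSubmodule_injective this
  · right; exact h1
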